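/- arXiv:1302.0072 — 7 statements merged into one kernel-verified Lean document; each statement's English description precedes it below -/
import Mathlib

section
/- If a string P of length m is periodic with primitive period u of length p ≤ m/2, then any two occurrences of P in a text that start at positions i < j with j - i < m - p must satisfy j - i ≡ 0 (mod p). Equivalently, the distance between the starting positions of two overlapping occurrences of P (overlapping by more than p characters) is a multiple of the period p. -/
/-- `w^k` : concatenation of `k` copies of `w`. -/
def listPow {α : Type*} (w : List α) (k : ℕ) : List α := (List.replicate k w).flatten

/-- A string is primitive if it is not a proper power `w^j` with `j > 1`. -/
def IsPrimitive {α : Type*} (S : List α) : Prop :=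
  ∀ (w : List α) (j : ℕ), 1 < j → S ≠ listPow w j

/-- `P` occurs in the list `T` at position `i`. -/
def OccursAt {α : Type*} (P T : List α) (i : ℕ) : Prop :=
  (T.drop i).take P.length = P

lemma listPow_length {α : Type*} (w : List α) (k : ℕ) :
    (listPow w k).length = k * w.length := by
  induction k with
  | zero => simp [listPow]
  | succ n ih => simp only [listPow, List.replicate_succ, List.flatten_cons,
      List.length_append] at *; rw [ih]; ring

lemma listPow_one {α : Type*} (w : List α) : listPow w 1 = w := by
  simp [listPow]

lemma listPow_add {α : Type*} (w : List α) (a b : ℕ) :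
    listPow w (a + b) = listPow w a ++ listPow w b := by
  unfold listPow; rw [List.replicate_add, List.flatten_append]

lemma comm_listPow {α : Type*} :
    ∀ (n : ℕ) (x y : List α), x.length + y.length ≤ n → x ++ y = y ++ x →
    ∃ (w : List α) (a b : ℕ), x = listPow w a ∧ y = listPow w b := by
  intro n
  induction n with
  | zero =>
    intro x y hl _
    have hx : x = [] := List.eq_nil_of_length_eq_zero (by omega)
    have hy : y = [] := List.eq_nil_of_length_eq_zero (by omega)
    exact ⟨[], 0, 0, by simp [hx, listPow], by simp [hy, listPow]⟩
  | succ n ih =>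
    intro x y hl h
    rcases eq_or_ne x [] with hx | hx
    · exact ⟨y, 0, 1, by simp [hx, listPow], by simp [listPow]⟩
    rcases eq_or_ne y [] with hy | hy
    · exact ⟨x, 1, 0, by simp [listPow], by simp [hy, listPow]⟩
    rcases le_or_gt x.length y.length with hle | hlt
    · have hxy : x <+: y := by
        apply List.prefix_of_prefix_length_le _ (List.prefix_append y x) hle
        rw [← h]; exact List.prefix_append x y
      obtain ⟨z, hz⟩ := hxy
      rw [← hz] at h
      have h2 : x ++ z = z ++ x := by
        rw [List.append_assoc] at h
        exact List.append_cancel_left h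
      have hxpos : 0 < x.length := List.length_pos_iff.mpr hx
      have hlz : x.length + z.length = y.length := by
        have := congrArg List.length hz
        simpa using this
      obtain ⟨w, a, b, hxa, hzb⟩ := ih x z (by omega) h2
      refine ⟨w, a, a + b, hxa, ?_⟩
      rw [← hz, hxa, hzb, ← listPow_add]
    · have hyx : y <+: x := by
        apply List.prefix_of_prefix_length_le _ (List.prefix_append x y) (le_of_lt hlt)
        rw [h]; exact List.prefix_append y x
      obtain ⟨z, hz⟩ := hyx
      rw [← hz] at h
      have h2 : y ++ z = z ++ y := by
        rw [List.append_assoc] at h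
        exact (List.append_cancel_left h).symm
      have hypos : 0 < y.length := List.length_pos_iff.mpr hy
      have hlz : y.length + z.length = x.length := by
        have := congrArg List.length hz
        simpa using this
      obtain ⟨w, a, b, hya, hzb⟩ := ih y z (by omega) h2
      refine ⟨w, a + b, a, ?_, hya⟩
      rw [← hz, hya, hzb, ← listPow_add]

lemma primitive_of_rotate {α : Type*} (u : List α) (hprim : IsPrimitive u) (r : ℕ)
    (hr0 : 0 < r) (hrp : r < u.length) (h : u = u.drop r ++ u.take r) : False := by
  set x := u.take r with hx
  set y := u.drop r with hy
  have hxy : x ++ y = u := List.take_append_drop r u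
  have hcomm : x ++ y = y ++ x := by rw [hxy, h]
  obtain ⟨w, a, b, hxa, hyb⟩ := comm_listPow (x.length + y.length) x y le_rfl hcomm
  have hxlen : x.length = r := by simp [hx]; omega
  have hylen : y.length = u.length - r := by simp [hy]
  have ha : 1 ≤ a := by
    rcases Nat.eq_zero_or_pos a with h0 | h0
    · subst h0; simp [listPow] at hxa
      rw [hxa] at hxlen; simp at hxlen; omega
    · exact h0
  have hb : 1 ≤ b := by
    rcases Nat.eq_zero_or_pos b with h0 | h0
    · subst h0; simp [listPow] at hyb
      rw [hyb] at hylen; simp at hylen; omega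
    · exact h0
  have hu : u = listPow w (a + b) := by rw [listPow_add, ← hxa, ← hyb, hxy]
  exact hprim w (a + b) (by omega) hu

/-- If `P` of length `m` is periodic with primitive period `u` of length
`p ≤ m/2`, then two occurrences of `P` at positions `i < j` with
`j - i < m - p` satisfy `p ∣ (j - i)`. -/
theorem overlapping_occurrences_period_divides {α : Type*}
    (P u u' T : List α) (k : ℕ)
    (hprim : IsPrimitive u) (hk : 2 ≤ k) (hu' : u' <+: u) (hu'ne : u' ≠ u)
    (hP : P = listPow u k ++ u')
    (hp2 : 2 * u.length ≤ P.length)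
    (i j : ℕ) (hij : i < j) (hdist : j - i < P.length - u.length)
    (hOi : OccursAt P T i) (hOj : OccursAt P T j) :
    u.length ∣ (j - i) := by
  have hune : u ≠ [] := by
    intro hc
    apply hu'ne
    rw [hc] at hu' ⊢
    exact List.prefix_nil.mp hu'
  have hppos : 0 < u.length := List.length_pos_iff.mpr hune
  have hu'len : u'.length < u.length := by
    rcases lt_or_eq_of_le hu'.length_le with h | h
    · exact h
    · exact absurd (List.IsPrefix.eq_of_length hu' h) hu'ne
  have hmlen : P.length = k * u.length + u'.length := by
    rw [hP]; simp [listPow_length]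
  have hdm : (j - i) + u.length < P.length := by omega
  have hdpos : 0 < j - i := by omega
  have hPQ : ∃ s, P ++ s = listPow u (k + 1) := by
    obtain ⟨s, hs⟩ := hu'
    exact ⟨s, by rw [hP, listPow_add, listPow_one, List.append_assoc, hs]⟩
  have hPu : P.take u.length = u := by
    rw [hP]
    have hk1 : k = 1 + (k - 1) := by omega
    rw [hk1, listPow_add, listPow_one, List.append_assoc, List.take_append]
    simp
  have hkey : (P.drop (j - i)).take u.length = u := by
    have hji : j = i + (j - i) := by omega
    have h1 : T.drop j = (T.drop i).drop (j - i) := by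
      rw [List.drop_drop, Nat.add_sub_cancel' (le_of_lt hij)]
    have h2 : ((T.drop i).drop (j - i)).take u.length = u := by
      rw [← h1]
      have h4 : (T.drop j).take u.length = ((T.drop j).take P.length).take u.length := by
        rw [List.take_take, min_eq_left (by omega)]
      rw [h4, hOj, hPu]
    have h3 : P.drop (j - i) = ((T.drop i).drop (j - i)).take (P.length - (j - i)) := by
      conv_lhs => rw [← hOi]
      rw [List.drop_take]
    rw [h3, List.take_take, min_eq_left (by omega)]
    exact h2
  have hQkey : ((listPow u (k + 1)).drop (j - i)).take u.length = u := by
    obtain ⟨s, hs⟩ := hPQ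
    rw [← hs, List.drop_append, List.take_append]
    have hl1 : (P.drop (j - i)).length = P.length - (j - i) := by simp
    have hl2 : u.length - (P.drop (j - i)).length = 0 := by omega
    have hl3 : (j - i) - P.length = 0 := by omega
    rw [hl3, hl2]
    simp [hkey]
  have hdq : (j - i) / u.length * u.length + (j - i) % u.length = j - i := by
    rw [Nat.mul_comm]; exact Nat.div_add_mod _ _
  have hrlt : (j - i) % u.length < u.length := Nat.mod_lt _ hppos
  rcases Nat.eq_zero_or_pos ((j - i) % u.length) with hr0 | hr0
  · exact Nat.dvd_of_mod_eq_zero hr0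
  exfalso
  have hkp : j - i < k * u.length := by omega
  have hqk : (j - i) / u.length < k :=
    (Nat.div_lt_iff_lt_mul hppos).mpr
      (by exact hkp)
  set q := (j - i) / u.length with hq
  set r := (j - i) % u.length with hr
  set n := k + 1 - q with hn
  have hn2 : 2 ≤ n := by omega
  have hQsplit : listPow u (k + 1) = listPow u q ++ listPow u n := by
    rw [← listPow_add]
    congr 1
    omega
  have hdrop : (listPow u (k + 1)).drop (j - i) = (listPow u n).drop r := by
    rw [hQsplit, List.drop_append, listPow_length]
    have h1 : (listPow u q).drop (j - i) = [] := by
      apply List.drop_eq_nil_of_le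
      rw [listPow_length]
      omega
    rw [h1]
    simp only [List.nil_append]
    congr 1
    omega
  have hnsplit : listPow u n = u ++ (u ++ listPow u (n - 2)) := by
    have h5 : n = 1 + (1 + (n - 2)) := by omega
    conv_lhs => rw [h5]
    rw [listPow_add, listPow_add, listPow_one]
  have hrot : u = u.drop r ++ u.take r := by
    have h6 := hQkey
    rw [hdrop, hnsplit, List.drop_append] at h6
    have e1 : r - u.length = 0 := by omega
    rw [e1, List.drop_zero, List.take_append] at h6
    have e2 : (u.drop r).length = u.length - r := by simp
    have e3 : u.length - (u.drop r).length = r := by omega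
    rw [e3, List.take_append] at h6
    have e4 : r - u.length = 0 := by omega
    rw [e4, List.take_zero, List.append_nil,
      List.take_of_length_le (by rw [List.length_drop]; omega)] at h6
    exact h6.symm
  exact primitive_of_rotate u hprim r hr0 hrlt hrot
end

section
/- Fine and Wilf's periodicity lemma: if a string S of length n has periods p and q (meaning S[i] = S[i+p] for all valid i, and S[i] = S[i+q] for all valid i) with p + q - gcd(p,q) ≤ n, then S also has period gcd(p,q). -/
/-- A string `S` of length `n` (modelled as a function on ℕ) has period `p`
if `S i = S (i + p)` for all `i` with `i + p < n`. -/
def HasPeriod {α : Type*} (S : ℕ → α) (n p : ℕ) : Prop :=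
  ∀ i, i + p < n → S i = S (i + p)

lemma fw_chain {α : Type*} (S : ℕ → α) (m g : ℕ) (h : HasPeriod S m g) :
    ∀ k a, a + k * g < m → S a = S (a + k * g) := by
  intro k
  induction k with
  | zero => simp
  | succ k ih =>
    intro a ha
    have e : a + (k + 1) * g = (a + g) + k * g := by ring
    rw [e] at ha ⊢
    have h1 : a + g < m := by nlinarith [Nat.zero_le (k * g)]
    calc S a = S (a + g) := h a h1
    _ = S (a + g + k * g) := ih (a + g) ha

lemma fw_congr_mod {α : Type*} (S : ℕ → α) (m g : ℕ) (h : HasPeriod S m g)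
    (a b : ℕ) (hab : a ≤ b) (hmod : a % g = b % g) (hb : b < m) : S a = S b := by
  have hdvd : g ∣ b - a := (Nat.modEq_iff_dvd' hab).mp hmod
  obtain ⟨k, hk⟩ := hdvd
  have e : a + k * g = b := by
    rw [Nat.mul_comm g k] at hk
    rw [← hk]
    exact Nat.add_sub_cancel' hab
  rw [← e] at hb ⊢
  exact fw_chain S m g h k a hb

lemma fw_red {α : Type*} (S : ℕ → α) (n q : ℕ) (hq : 0 < q)
    (hQ : HasPeriod S n q) : ∀ j, j < n → S (j % q) = S j := by
  intro j
  induction j using Nat.strong_induction_on with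
  | _ j ih =>
    intro hj
    by_cases h : j < q
    · rw [Nat.mod_eq_of_lt h]
    · have h1 := hQ (j - q) (by omega)
      have e : j - q + q = j := by omega
      rw [e] at h1
      rw [← h1]
      rw [Nat.mod_eq_sub_mod (by omega)]
      exact ih (j - q) (by omega) (by omega)

lemma fw_step {α : Type*} (S : ℕ → α) (n p q : ℕ) (hq : 0 < q)
    (h2q : 2 * q ≤ n) (hQ : HasPeriod S n q)
    (hrec : HasPeriod S (n - q) (Nat.gcd p q)) :
    HasPeriod S n (Nat.gcd p q) := by
  set g := Nat.gcd p q with hg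
  have hgq : g ∣ q := Nat.gcd_dvd_right p q
  intro i hi
  have hin : i < n := by omega
  have h1 := fw_red S n q hq hQ i hin
  have h2 := fw_red S n q hq hQ (i + g) hi
  set a := i % q with hadef
  set b := (i + g) % q with hbdef
  have hab : a % g = b % g := by
    have e1 : a % g = i % g := Nat.mod_mod_of_dvd i hgq
    have e2 : b % g = (i + g) % g := Nat.mod_mod_of_dvd (i + g) hgq
    rw [e1, e2, Nat.add_mod_right]
  have ha : a < q := Nat.mod_lt _ hq
  have hb : b < q := Nat.mod_lt _ hq
  rcases le_total a b with hle | hle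
  · have := fw_congr_mod S (n - q) g hrec a b hle hab (by omega)
    rw [← h1, ← h2, this]
  · have := fw_congr_mod S (n - q) g hrec b a hle hab.symm (by omega)
    rw [← h1, ← h2, this]

lemma fw_gcd_sub (p q : ℕ) (h : q ≤ p) : Nat.gcd (p - q) q = Nat.gcd p q := by
  apply Nat.dvd_antisymm
  · exact Nat.dvd_gcd
      (by
        have h1 : Nat.gcd (p - q) q ∣ p - q := Nat.gcd_dvd_left _ _
        have h2 : Nat.gcd (p - q) q ∣ q := Nat.gcd_dvd_right _ _
        have := Nat.dvd_add h1 h2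
        rwa [Nat.sub_add_cancel h] at this)
      (Nat.gcd_dvd_right _ _)
  · exact Nat.dvd_gcd (Nat.dvd_sub (Nat.gcd_dvd_left _ _) (Nat.gcd_dvd_right _ _))
      (Nat.gcd_dvd_right _ _)

lemma fw_reduce {α : Type*} (S : ℕ → α) (n p q : ℕ) (hq : 0 < q) (hlt : q < p)
    (hpn : p ≤ n) (hlen : p + q - Nat.gcd p q ≤ n)
    (hP : HasPeriod S n p) (hQ : HasPeriod S n q)
    (IH : ∀ p' q' n', p' + q' ≤ p → 0 < p' → 0 < q' → p' ≤ n' → q' ≤ n' →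
      p' + q' - Nat.gcd p' q' ≤ n' → HasPeriod S n' p' → HasPeriod S n' q' →
      HasPeriod S n' (Nat.gcd p' q')) :
    HasPeriod S n (Nat.gcd p q) := by
  set g := Nat.gcd p q with hg
  have hgp : g ∣ p := Nat.gcd_dvd_left p q
  have hgq : g ∣ q := Nat.gcd_dvd_right p q
  have hgle : g ≤ q := Nat.le_of_dvd hq hgq
  have hgsub : g ∣ p - q := Nat.dvd_sub hgp hgq
  have hgpos : 0 < g := Nat.gcd_pos_of_pos_right p hq
  have hsub : g ≤ p - q := Nat.le_of_dvd (by omega) hgsub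
  have h2q : 2 * q ≤ n := by omega
  have hgcd' : Nat.gcd (p - q) q = g := fw_gcd_sub p q (le_of_lt hlt)
  have hP' : HasPeriod S (n - q) (p - q) := by
    intro i hilt
    have h1 := hQ (i + (p - q)) (by omega)
    have h2 := hP i (by omega)
    have e : i + (p - q) + q = i + p := by omega
    rw [e] at h1
    rw [h2, h1]
  have hQ' : HasPeriod S (n - q) q := fun i h => hQ i (by omega)
  have hrec := IH (p - q) q (n - q) (by omega) (by omega) hq (by omega) (by omega)
    (by rw [hgcd']; omega) hP' hQ'
  rw [hgcd'] at hrec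
  exact fw_step S n p q hq h2q hQ hrec

lemma fw_aux {α : Type*} : ∀ N p q n (S : ℕ → α), p + q ≤ N → 0 < p → 0 < q →
    p ≤ n → q ≤ n → p + q - Nat.gcd p q ≤ n → HasPeriod S n p → HasPeriod S n q →
    HasPeriod S n (Nat.gcd p q) := by
  intro N
  induction N with
  | zero =>
    intro p q n S hN hp
    exfalso
    have h0 : p + q ≤ 0 := hN
    omega
  | succ N ih =>
    intro p q n S hN hp hq hpn hqn hlen hP hQ
    by_cases hqp : q ∣ p
    · rw [Nat.gcd_eq_right hqp]
      exact hQ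
    by_cases hpq : p ∣ q
    · rw [Nat.gcd_eq_left hpq]
      exact hP
    have hne : p ≠ q := fun h => hqp (h ▸ dvd_refl p)
    rcases Nat.lt_or_ge q p with hlt | hge
    · exact fw_reduce S n p q hq hlt hpn hlen hP hQ
        (fun p' q' n' h h1 h2 h3 h4 h5 h6 h7 =>
          ih p' q' n' S (by omega) h1 h2 h3 h4 h5 h6 h7)
    · have hlt : p < q := by omega
      rw [Nat.gcd_comm]
      exact fw_reduce S n q p hp hlt hqn (by rw [Nat.gcd_comm, Nat.add_comm]; exact hlen) hQ hP
        (fun p' q' n' h h1 h2 h3 h4 h5 h6 h7 =>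
          ih p' q' n' S (by omega) h1 h2 h3 h4 h5 h6 h7)

/-- Fine and Wilf's periodicity lemma: a string of length `n` with periods
`p` and `q` such that `p + q - gcd(p,q) ≤ n` also has period `gcd(p,q)`. -/
theorem fine_and_wilf {α : Type*} (S : ℕ → α) (n p q : ℕ)
    (hp : 0 < p) (hq : 0 < q) (hpn : p ≤ n) (hqn : q ≤ n)
    (hlen : p + q - Nat.gcd p q ≤ n)
    (hP : HasPeriod S n p) (hQ : HasPeriod S n q) :
    HasPeriod S n (Nat.gcd p q) := by
  exact fw_aux (p + q) p q n S le_rfl hp hq hpn hqn hlen hP hQ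
end

section
/- Let P be an m × m̄ matrix (2D pattern) in which every row i is periodic with primitive period of length p_i ≤ m̄/4. Then the horizontal distance between any two occurrences of P in the same row of a text, whose occurrences overlap in at least m̄/2 columns, is a multiple of L = lcm(p_1, ..., p_m). -/
/-- Row `i` of the `m × mb` matrix `P` has period `p`. -/
def RowHasPeriod {α : Type*} (P : ℕ → ℕ → α) (mb i p : ℕ) : Prop :=
  ∀ j, j + p < mb → P i j = P i (j + p)

/-- `p` is the length of the primitive (i.e. smallest) period of row `i`. -/
def RowPrimPeriod {α : Type*} (P : ℕ → ℕ → α) (mb i p : ℕ) : Prop :=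
  0 < p ∧ RowHasPeriod P mb i p ∧ ∀ q, 0 < q → q < p → ¬ RowHasPeriod P mb i q

/-- The `m × mb` pattern `P` occurs in the 2D text `T` at position `(r, c)`. -/
def Occurs2D {α : Type*} (P T : ℕ → ℕ → α) (m mb r c : ℕ) : Prop :=
  ∀ i < m, ∀ j < mb, T (r + i) (c + j) = P i j

/-- A primitive period `p` of a word of length `n` divides any other period `d`
with `p + d ≤ n`. -/
lemma prim_period_dvd {α : Type*} (f : ℕ → α) (n pp d : ℕ) (hp : 0 < pp)
    (hper : ∀ j, j + pp < n → f j = f (j + pp))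
    (hmin : ∀ q, 0 < q → q < pp → ¬ (∀ j, j + q < n → f j = f (j + q)))
    (hd : ∀ j, j + d < n → f j = f (j + d)) (hpd : pp + d ≤ n) :
    pp ∣ d := by
  set F : ℕ → α := fun j => f (j % pp) with hF
  -- f agrees with F on [0, n)
  have hfF : ∀ j, j < n → f j = F j := by
    intro j
    induction j using Nat.strong_induction_on with
    | _ j ih =>
      intro hj
      by_cases hjp : j < pp
      · simp [hF, Nat.mod_eq_of_lt hjp]
      · push_neg at hjp
        have h1 : j - pp + pp < n := by omega
        have h2 : f (j - pp) = f (j - pp + pp) := hper _ h1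
        have h3 : j - pp + pp = j := by omega
        have h4 := ih (j - pp) (by omega) (by omega)
        have h5 : (j - pp) % pp = j % pp := by
          conv_rhs => rw [Nat.mod_eq_sub_mod hjp]
        rw [← h3, ← h2, h4]
        simp [hF, h5]
  -- F is d-periodic everywhere
  have hFd : ∀ j, F (j + d) = F j := by
    intro j
    have hk : j % pp < pp := Nat.mod_lt _ hp
    have h1 : j % pp + d < n := by omega
    have h2 : f (j % pp) = f (j % pp + d) := hd _ h1
    have h3 : f (j % pp + d) = F (j % pp + d) := hfF _ h1
    have h4 : (j % pp + d) % pp = (j + d) % pp := by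
      conv_rhs => rw [Nat.add_mod]
      rw [Nat.add_mod (j % pp)]
      simp
    calc F (j + d) = f ((j + d) % pp) := rfl
      _ = f ((j % pp + d) % pp) := by rw [h4]
      _ = F (j % pp + d) := rfl
      _ = f (j % pp + d) := (h3).symm
      _ = f (j % pp) := h2.symm
      _ = F j := rfl
  -- F is (d % pp)-periodic everywhere
  have hFs : ∀ j, F (j + d % pp) = F j := by
    intro j
    have h4 : (j + d % pp) % pp = (j + d) % pp := by
      conv_rhs => rw [Nat.add_mod]
      rw [Nat.add_mod j (d % pp)]
      simp
    calc F (j + d % pp) = f ((j + d % pp) % pp) := rfl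
      _ = f ((j + d) % pp) := by rw [h4]
      _ = F (j + d) := rfl
      _ = F j := hFd j
  -- conclude d % pp = 0
  rcases Nat.eq_zero_or_pos (d % pp) with hs | hs
  · exact Nat.dvd_of_mod_eq_zero hs
  · exfalso
    apply hmin (d % pp) hs (Nat.mod_lt _ hp)
    intro j hj
    have hjn : j < n := by omega
    rw [hfF j hjn, hfF (j + d % pp) hj, hFs]

/-- If every row `i` of an `m × mb` pattern is periodic with primitive period
`p i ≤ mb/4`, then the horizontal distance between two occurrences in the same
text row that overlap in at least `mb/2` columns is a multiple of
`L = lcm (p 1, ..., p m)`. -/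
theorem lcm_divides_horizontal_distance {α : Type*} (P T : ℕ → ℕ → α)
    (m mb : ℕ) (p : ℕ → ℕ)
    (hper : ∀ i < m, RowPrimPeriod P mb i (p i))
    (hquarter : ∀ i < m, 4 * p i ≤ mb)
    (r c c' : ℕ) (hcc : c ≤ c') (hoverlap : 2 * (c' - c) ≤ mb)
    (hO : Occurs2D P T m mb r c) (hO' : Occurs2D P T m mb r c') :
    (Finset.range m).lcm p ∣ (c' - c) := by
  set d := c' - c with hdd
  apply Finset.lcm_dvd
  intro i hi
  rw [Finset.mem_range] at hi
  obtain ⟨hp, hrow, hmin⟩ := hper i hi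
  have hq := hquarter i hi
  -- d is a period of row i
  have hd : ∀ j, j + d < mb → P i j = P i (j + d) := by
    intro j hj
    have h1 : T (r + i) (c' + j) = P i j := hO' i hi j (by omega)
    have h2 : T (r + i) (c + (j + d)) = P i (j + d) := hO i hi (j + d) hj
    have h3 : c' + j = c + (j + d) := by omega
    rw [← h1, ← h2, h3]
  exact prim_period_dvd (P i) mb (p i) d hp hrow hmin hd (by omega)
end

section
/- Transitivity of dueling / consistency: define two pattern placements (i, P) and (j, Q) in a text (P placed at position i, Q at position j, i ≤ j) to be consistent if they agree on their overlap, i.e., P[k + (j - i)] = Q[k] for all k with 0 ≤ k < |Q| and 0 ≤ k + (j-i) < |P|. If placements of the same pattern P at positions i ≤ j ≤ k are such that (i,P) is consistent with (j,P) and (j,P) is consistent with (k,P), and the three placements pairwise overlap (k - i < |P|), then (i,P) is consistent with (k,P). -/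
/-- Placements of the pattern `P` (of length `mP`) at positions `i ≤ j` of a
text are consistent if they agree on every text position they both cover. -/
def Consistent {α : Type*} (P : ℕ → α) (mP i j : ℕ) : Prop :=
  ∀ t, t < mP → t + (j - i) < mP → P (t + (j - i)) = P t

/-- Transitivity of dueling/consistency for placements of the same pattern:
if the placements of `P` at `i ≤ j ≤ k` pairwise overlap (`k - i < mP`) and
`(i,P)` is consistent with `(j,P)` and `(j,P)` with `(k,P)`, then `(i,P)` is
consistent with `(k,P)`. -/
theorem consistency_transitive {α : Type*} (P : ℕ → α) (mP i j k : ℕ)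
    (hij : i ≤ j) (hjk : j ≤ k) (hoverlap : k - i < mP)
    (h1 : Consistent P mP i j) (h2 : Consistent P mP j k) :
    Consistent P mP i k := by
  intro t ht htk
  have hki : k - i = (k - j) + (j - i) := by omega
  have h2' := h2 t ht (by omega)
  have h1' := h1 (t + (k - j)) (by omega) (by omega)
  rw [hki, ← Nat.add_assoc, h1', h2']
end

section
/- If two m × m̄ matrices have identical 1D row-name representations (row i of both matrices is periodic with a conjugate of the same primitive Lyndon word u_i for each i) and their 2D Lyndon word representatives are equal with equal alignment columns, then the matrices are equal. Conversely, equal matrices have equal 2D Lyndon word representatives. -/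
/-- A word is a Lyndon word if it is nonempty, primitive, and lexicographically
minimal among its conjugates. -/
def IsLyndon {α : Type*} [LinearOrder α] (u : List α) : Prop :=
  u ≠ [] ∧ IsPrimitive u ∧ ∀ x y : List α, u = x ++ y → y ≠ [] → x ≠ [] → u ≤ y ++ x

/-- The matrix over `Fin m × Fin mb` whose row `i` is the factor of `(u i)^∞`
starting at offset `a i`. -/
noncomputable def rowMatrix {α : Type*} {m mb : ℕ} (u : Fin m → List α)
    (hu : ∀ i, u i ≠ []) (a : Fin m → ℕ) : Fin m → Fin mb → α :=
  fun i j => (u i).get ⟨(a i + j) % (u i).length, Nat.mod_lt _ (List.length_pos_iff.mpr (hu i))⟩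

lemma listPow_append {α : Type*} (w : List α) (k l : ℕ) :
    listPow w k ++ listPow w l = listPow w (k + l) := by
  unfold listPow
  rw [List.replicate_add, List.flatten_append]

lemma comm_pow {α : Type*} : ∀ (n : ℕ) (x y : List α), x.length + y.length ≤ n →
    x ++ y = y ++ x → ∃ z k l, x = listPow z k ∧ y = listPow z l := by
  intro n
  induction n with
  | zero =>
    intro x y hn _
    have hx : x = [] := by
      cases x <;> simp_all
    have hy : y = [] := by cases y <;> simp_all
    exact ⟨[], 0, 0, by simp [hx, listPow], by simp [hy, listPow]⟩
  | succ n ih =>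
    intro x y hn hcomm
    rcases eq_or_ne x [] with hx | hx
    · exact ⟨y, 0, 1, by simp [hx, listPow], by simp [listPow]⟩
    rcases eq_or_ne y [] with hy | hy
    · exact ⟨x, 1, 0, by simp [listPow], by simp [hy, listPow]⟩
    rcases le_total x.length y.length with hle | hle
    · -- x prefix of y
      have hpre : x <+: y := by
        have : x <+: x ++ y := List.prefix_append x y
        rw [hcomm] at this
        exact List.prefix_of_prefix_length_le this (List.prefix_append y x) hle
      obtain ⟨t, ht⟩ := hpre
      have hcomm' : x ++ t = t ++ x := by
        have : x ++ (x ++ t) = (x ++ t) ++ x := by rw [ht, hcomm]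
        simpa [List.append_assoc, List.append_cancel_left_eq] using this
      have hlen : x.length + t.length ≤ n := by
        have hxpos : 0 < x.length := List.length_pos_iff.mpr hx
        have : y.length = x.length + t.length := by rw [← ht]; simp
        omega
      obtain ⟨z, k, l, hzk, hzl⟩ := ih x t hlen hcomm'
      exact ⟨z, k, k + l, hzk, by rw [← ht, hzk, hzl, listPow_append]⟩
    · have hpre : y <+: x := by
        have : y <+: y ++ x := List.prefix_append y x
        rw [← hcomm] at this
        exact List.prefix_of_prefix_length_le this (List.prefix_append x y) hle
      obtain ⟨t, ht⟩ := hpre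
      have hcomm' : y ++ t = t ++ y := by
        have : y ++ (y ++ t) = (y ++ t) ++ y := by rw [ht, ← hcomm]
        simpa [List.append_assoc, List.append_cancel_left_eq] using this
      have hlen : y.length + t.length ≤ n := by
        have hypos : 0 < y.length := List.length_pos_iff.mpr hy
        have : x.length = y.length + t.length := by rw [← ht]; simp
        omega
      obtain ⟨z, k, l, hzk, hzl⟩ := ih y t hlen hcomm'
      exact ⟨z, l + k, k, by rw [← ht, hzk, hzl, listPow_append, Nat.add_comm], hzk⟩

lemma rotate_eq_self_primitive {α : Type*} {u : List α} (hu : u ≠ [])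
    (hprim : IsPrimitive u) {s : ℕ} (hs : s < u.length) (hrot : u.rotate s = u) :
    s = 0 := by
  by_contra hs0
  set x := u.take s with hx
  set y := u.drop s with hy
  have hxy : u = x ++ y := (List.take_append_drop s u).symm
  have hrot' : u.rotate s = y ++ x := List.rotate_eq_drop_append_take hs.le
  have hcomm : x ++ y = y ++ x := by rw [← hxy, ← hrot', hrot]
  obtain ⟨z, k, l, hzk, hzl⟩ := comm_pow (x.length + y.length) x y le_rfl hcomm
  have hxne : x ≠ [] := by
    simp [hx, List.take_eq_nil_iff, hs0, hu]
  have hyne : y ≠ [] := by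
    simp only [hy, ne_eq, List.drop_eq_nil_iff]
    omega
  have hk : 1 ≤ k := by
    rcases Nat.eq_zero_or_pos k with h | h
    · exfalso; apply hxne; rw [hzk, h]; simp [listPow]
    · exact h
  have hl : 1 ≤ l := by
    rcases Nat.eq_zero_or_pos l with h | h
    · exfalso; apply hyne; rw [hzl, h]; simp [listPow]
    · exact h
  exact hprim z (k + l) (by omega) (by rw [hxy, hzk, hzl, listPow_append])

/-- Two `m × mb` matrices whose rows are periodic in the same primitive Lyndon
words `u i` (with `|u i| ≤ mb/4`) are equal iff their row alignments agree,
i.e. iff their 2D Lyndon word representatives together with the alignment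
columns coincide: `A = A' ↔ ∀ i, a i ≡ a' i (mod |u i|)`. -/
theorem eq_iff_same_2D_lyndon_representative {α : Type*} [LinearOrder α]
    {m mb : ℕ} (u : Fin m → List α) (hu : ∀ i, u i ≠ [])
    (hLyndon : ∀ i, IsLyndon (u i))
    (hquarter : ∀ i, 4 * (u i).length ≤ mb)
    (a a' : Fin m → ℕ) :
    rowMatrix (mb := mb) u hu a = rowMatrix (mb := mb) u hu a' ↔
      ∀ i, a i % (u i).length = a' i % (u i).length := by
  constructor
  · intro h i
    set L := (u i).length with hLdef
    have hL : 0 < L := List.length_pos_iff.mpr (hu i)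
    have hLmb : 2 * L ≤ mb := by have := hquarter i; omega
    set b := a i % L with hbdef
    set b' := a' i % L with hb'def
    have hb : b < L := Nat.mod_lt _ hL
    have hb' : b' < L := Nat.mod_lt _ hL
    set s := (L - b) + b' with hsdef
    -- value of row entries as a function of the absolute position
    have hrow : ∀ j : ℕ, j < mb →
        (u i).get ⟨(a i + j) % L, Nat.mod_lt _ hL⟩ =
        (u i).get ⟨(a' i + j) % L, Nat.mod_lt _ hL⟩ := by
      intro j hj
      exact congrFun (congrFun h i) ⟨j, hj⟩
    have key : ∀ k : ℕ, (hk : k < L) →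
        (u i).get ⟨(k + s) % L, Nat.mod_lt _ hL⟩ = (u i).get ⟨k, hk⟩ := by
      intro k hk
      have hjmb : (L - b) + k < mb := by omega
      have h1 : (a i + ((L - b) + k)) % L = k := by
        have e1 : (a i + ((L - b) + k)) % L = (a i % L + ((L - b) + k)) % L :=
          (Nat.mod_add_mod (a i) L _).symm
        rw [e1, ← hbdef]
        have e2 : b + ((L - b) + k) = L + k := by omega
        rw [e2, Nat.add_mod_left, Nat.mod_eq_of_lt hk]
      have h2 : (a' i + ((L - b) + k)) % L = (k + s) % L := by
        have e1 : (a' i + ((L - b) + k)) % L = (a' i % L + ((L - b) + k)) % L :=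
          (Nat.mod_add_mod (a' i) L _).symm
        rw [e1, ← hb'def]
        congr 1
        omega
      have := hrow ((L - b) + k) hjmb
      simp only [h1, h2] at this
      exact this.symm
    have hrot : (u i).rotate s = u i := by
      apply List.ext_get
      · simp [List.length_rotate]
      · intro n h1 h2
        rw [List.get_rotate]
        have hn : n < L := by simpa using h2
        have := key n hn
        convert this using 2
    have hrot' : (u i).rotate (s % L) = u i := by
      rw [List.rotate_mod]; exact hrot
    have hs0 : s % L = 0 :=
      rotate_eq_self_primitive (hu i) (hLyndon i).2.1 (Nat.mod_lt _ hL) hrot'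
    obtain ⟨c, hc⟩ := (Nat.dvd_of_mod_eq_zero hs0 : L ∣ s)
    rcases c with _ | _ | c
    · omega
    · omega
    · exfalso
      have : L * (c + 1 + 1) = L * c + L + L := by ring
      omega
  · intro h
    funext i j
    show (u i).get _ = (u i).get _
    congr 1
    apply Fin.ext
    show (a i + ↑j) % (u i).length = (a' i + ↑j) % (u i).length
    rw [Nat.add_mod, h i, ← Nat.add_mod]
end

section
/- Let P be an m × m̄ pattern whose rows have primitive periods p_1, ..., p_m, all ≤ m̄/4, and let L = lcm(p_1, ..., p_m). If P occurs in a text row at columns c and c' with |c - c'| < m̄/2, then |c - c'| is a multiple of L; hence the set of occurrences of P within a fixed text row of a text block of width 3m̄/2 forms an arithmetic progression with common difference L and can be stored in O(1) words (first occurrence, difference, count). -/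
section Aux

variable {α : Type*}

lemma period_sub_aux (f : ℕ → α) (n a b : ℕ) (hab : a ≤ b) (hn : a + b ≤ n)
    (ha : ∀ j, j + a < n → f j = f (j + a)) (hb : ∀ j, j + b < n → f j = f (j + b)) :
    ∀ j, j + (b - a) < n → f j = f (j + (b - a)) := by
  intro j hj
  rcases lt_or_ge (j + b) n with h | h
  · have h1 := hb j h
    have h2 := ha (j + (b - a)) (by omega)
    rw [show j + (b - a) + a = j + b by omega] at h2
    rw [h1, h2]
  · have h1 := ha (j - a) (by omega)
    rw [show j - a + a = j by omega] at h1
    have h2 := hb (j - a) (by omega)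
    rw [show j - a + b = j + (b - a) by omega] at h2
    rw [← h1, h2]

lemma period_gcd_aux (f : ℕ → α) (n : ℕ) :
    ∀ N a b, a + b ≤ N → 0 < a → 0 < b → a + b ≤ n →
    (∀ j, j + a < n → f j = f (j + a)) → (∀ j, j + b < n → f j = f (j + b)) →
    ∀ j, j + Nat.gcd a b < n → f j = f (j + Nat.gcd a b) := by
  intro N
  induction N with
  | zero => intro a b hN ha hb _ _ _; omega
  | succ N ih =>
    intro a b hN ha hb hn hpa hpb
    rcases le_total a b with hab | hab
    · rcases eq_or_lt_of_le hab with rfl | hlt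
      · simpa [Nat.gcd_self] using hpa
      · have hsub := period_sub_aux f n a b hab hn hpa hpb
        have hgcd : Nat.gcd a b = Nat.gcd a (b - a) := by
          conv_lhs => rw [show b = (b - a) + a by omega, Nat.gcd_add_self_right]
        rw [hgcd]
        exact ih a (b - a) (by omega) ha (by omega) (by omega) hpa hsub
    · rcases eq_or_lt_of_le hab with rfl | hlt
      · simpa [Nat.gcd_self] using hpa
      · have hsub := period_sub_aux f n b a hab (by omega) hpb hpa
        have hgcd : Nat.gcd a b = Nat.gcd b (a - b) := by
          rw [Nat.gcd_comm]
          conv_lhs => rw [show a = (a - b) + b by omega, Nat.gcd_add_self_right]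
        rw [hgcd]
        exact ih b (a - b) (by omega) hb (by omega) (by omega) hpb hsub

lemma prim_dvd_period (P : ℕ → ℕ → α) (mb i pi d : ℕ)
    (hprim : RowPrimPeriod P mb i pi) (h4 : 4 * pi ≤ mb) (hd : 0 < d) (h2 : 2 * d ≤ mb)
    (hper : RowHasPeriod P mb i d) : pi ∣ d := by
  obtain ⟨hp0, hpper, hmin⟩ := hprim
  have hsum : pi + d ≤ mb := by omega
  have hg : RowHasPeriod P mb i (Nat.gcd pi d) :=
    period_gcd_aux (P i) mb (pi + d) pi d le_rfl hp0 hd hsum hpper hper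
  have hgpos : 0 < Nat.gcd pi d := Nat.gcd_pos_of_pos_left _ hp0
  have hgle : Nat.gcd pi d ≤ pi := Nat.le_of_dvd hp0 (Nat.gcd_dvd_left _ _)
  rcases lt_or_eq_of_le hgle with h | h
  · exact absurd hg (hmin _ hgpos h)
  · rw [← h]; exact Nat.gcd_dvd_right _ _

lemma occ_dvd (P T : ℕ → ℕ → α) (m mb : ℕ) (p : ℕ → ℕ)
    (hper : ∀ i < m, RowPrimPeriod P mb i (p i))
    (hquarter : ∀ i < m, 4 * p i ≤ mb) (r c c' : ℕ) (hle : c ≤ c')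
    (hlt : 2 * (c' - c) ≤ mb) (h1 : Occurs2D P T m mb r c) (h2 : Occurs2D P T m mb r c') :
    (Finset.range m).lcm p ∣ (c' - c) := by
  rcases Nat.eq_or_lt_of_le hle with rfl | hcc
  · simp
  apply Finset.lcm_dvd
  intro i hi
  rw [Finset.mem_range] at hi
  have hdpos : 0 < c' - c := by omega
  have hdper : RowHasPeriod P mb i (c' - c) := by
    intro j hj
    have e1 := h1 i hi (j + (c' - c)) hj
    have e2 := h2 i hi j (by omega)
    rw [show c + (j + (c' - c)) = c' + j by omega] at e1
    rw [← e2, e1]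
  exact prim_dvd_period P mb i (p i) (c' - c) (hper i hi) (hquarter i hi) hdpos hlt hdper

lemma occ_intermediate (P T : ℕ → ℕ → α) (mb pi : ℕ) (r i c₀ c₁ : ℕ)
    (hpp : RowHasPeriod P mb i pi) (hp0 : 0 < pi) (h4 : 4 * pi ≤ mb)
    (hle : c₀ ≤ c₁) (hhalf : 2 * (c₁ - c₀) ≤ mb)
    (h0 : ∀ j < mb, T (r + i) (c₀ + j) = P i j)
    (h1 : ∀ j < mb, T (r + i) (c₁ + j) = P i j)
    (s : ℕ) (hs : pi ∣ s) (hsle : c₀ + s ≤ c₁) :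
    ∀ j < mb, T (r + i) (c₀ + s + j) = P i j := by
  have step : ∀ x, c₀ ≤ x → x + pi < c₁ + mb → T (r + i) x = T (r + i) (x + pi) := by
    intro x hx hxp
    rcases lt_or_ge (x + pi) (c₀ + mb) with h | h
    · have e1 := h0 (x - c₀) (by omega)
      have e2 := h0 (x - c₀ + pi) (by omega)
      have e3 := hpp (x - c₀) (by omega)
      rw [show c₀ + (x - c₀) = x by omega] at e1
      rw [show c₀ + (x - c₀ + pi) = x + pi by omega] at e2
      rw [e1, e2, e3]
    · have hx1 : c₁ ≤ x := by omega
      have e1 := h1 (x - c₁) (by omega)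
      have e2 := h1 (x - c₁ + pi) (by omega)
      have e3 := hpp (x - c₁) (by omega)
      rw [show c₁ + (x - c₁) = x by omega] at e1
      rw [show c₁ + (x - c₁ + pi) = x + pi by omega] at e2
      rw [e1, e2, e3]
  have multi : ∀ t x, c₀ ≤ x → x + t * pi < c₁ + mb →
      T (r + i) x = T (r + i) (x + t * pi) := by
    intro t
    induction t with
    | zero => intro x _ _; simp
    | succ t ih =>
      intro x hx hxt
      rw [Nat.succ_mul] at hxt ⊢
      have hstep := step x hx (by omega)
      rw [hstep]
      have h2 := ih (x + pi) (by omega) (by omega)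
      rw [show x + pi + t * pi = x + (t * pi + pi) by omega] at h2
      exact h2
  intro j hj
  obtain ⟨t, ht⟩ := hs
  have hts : t * pi = s := by rw [ht, Nat.mul_comm]
  have hm := multi t (c₀ + j) (by omega) (by rw [hts]; omega)
  rw [hts, show c₀ + j + s = c₀ + s + j by omega] at hm
  rw [← hm]
  exact h0 j hj

end Aux

/-- Let `P` be an `m × mb` pattern whose rows have primitive periods
`p 1, ..., p m`, all `≤ mb/4`, and let `L = lcm (p 1, ..., p m)`. Then (i) two
occurrences of `P` in the same text row at columns `c, c'` with
`|c - c'| < mb/2` are `L`-aligned, and (ii) the occurrences of `P` in a fixed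
row of a text block of width `3mb/2` form an arithmetic progression with
common difference `L` (hence are storable in `O(1)` words). -/
theorem occurrences_form_arithmetic_progression {α : Type*} [DecidableEq α]
    (P T : ℕ → ℕ → α) (m mb : ℕ) (p : ℕ → ℕ)
    (hper : ∀ i < m, RowPrimPeriod P mb i (p i))
    (hquarter : ∀ i < m, 4 * p i ≤ mb) (r : ℕ) :
    (∀ c c', c ≤ c' → 2 * (c' - c) < mb →
      Occurs2D P T m mb r c → Occurs2D P T m mb r c' →
      (Finset.range m).lcm p ∣ (c' - c)) ∧
    ∀ b : ℕ, ∃ c₀ k : ℕ,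
      ((Finset.range (b + mb + 1)).filter
          (fun c => b ≤ c ∧ 2 * (c + mb) ≤ 2 * b + 3 * mb ∧
            ∀ i < m, ∀ j < mb, T (r + i) (c + j) = P i j)) =
        (Finset.range k).image (fun t => c₀ + t * (Finset.range m).lcm p) := by
  set L := (Finset.range m).lcm p with hLdef
  have hLpos : 0 < L := by
    rw [hLdef]
    apply Nat.pos_of_ne_zero
    intro h
    rw [Finset.lcm_eq_zero_iff] at h
    obtain ⟨i, hi, hpi⟩ := h
    rw [Finset.mem_range] at hi
    have := (hper i hi).1
    omega
  constructor
  · intro c c' hle hlt h1 h2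
    exact occ_dvd P T m mb p hper hquarter r c c' hle (by omega) h1 h2
  · intro b
    set S := ((Finset.range (b + mb + 1)).filter
          (fun c => b ≤ c ∧ 2 * (c + mb) ≤ 2 * b + 3 * mb ∧
            ∀ i < m, ∀ j < mb, T (r + i) (c + j) = P i j)) with hSdef
    by_cases hS : S.Nonempty
    · set c₀ := S.min' hS with hc0
      set c₁ := S.max' hS with hc1
      have hmemS : ∀ c ∈ S, c < b + mb + 1 ∧ b ≤ c ∧ 2 * c ≤ 2 * b + mb ∧
          Occurs2D P T m mb r c := by
        intro c hc
        rw [hSdef, Finset.mem_filter, Finset.mem_range] at hc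
        exact ⟨hc.1, hc.2.1, by omega, hc.2.2.2⟩
      have hc0S := S.min'_mem hS
      have hc1S := S.max'_mem hS
      have h0 := hmemS c₀ hc0S
      have h1 := hmemS c₁ hc1S
      have hle01 : c₀ ≤ c₁ := S.min'_le c₁ hc1S
      have hhalf : 2 * (c₁ - c₀) ≤ mb := by omega
      have hdvd01 : L ∣ (c₁ - c₀) :=
        occ_dvd P T m mb p hper hquarter r c₀ c₁ hle01 hhalf h0.2.2.2 h1.2.2.2
      refine ⟨c₀, (c₁ - c₀) / L + 1, ?_⟩
      ext c
      simp only [Finset.mem_image, Finset.mem_range]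
      constructor
      · intro hc
        have hmem := hmemS c hc
        have hlec : c₀ ≤ c := S.min'_le c hc
        have hgec : c ≤ c₁ := S.le_max' c hc
        have hdvd : L ∣ (c - c₀) :=
          occ_dvd P T m mb p hper hquarter r c₀ c hlec (by omega) h0.2.2.2 hmem.2.2.2
        refine ⟨(c - c₀) / L, ?_, ?_⟩
        · have := Nat.div_le_div_right (c := L) (by omega : c - c₀ ≤ c₁ - c₀)
          omega
        · rw [Nat.div_mul_cancel hdvd]; omega
      · rintro ⟨t, ht, rfl⟩
        have htle : t ≤ (c₁ - c₀) / L := by omega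
        have hsle : t * L ≤ c₁ - c₀ := by
          calc t * L ≤ ((c₁ - c₀) / L) * L := Nat.mul_le_mul_right L htle
          _ = c₁ - c₀ := Nat.div_mul_cancel hdvd01
        rw [hSdef, Finset.mem_filter, Finset.mem_range]
        refine ⟨by omega, by omega, by omega, ?_⟩
        intro i hi j hj
        have hpi := hper i hi
        have hdvdL : p i ∣ t * L := Dvd.dvd.mul_left (Finset.dvd_lcm (Finset.mem_range.mpr hi)) t
        exact occ_intermediate P T mb (p i) r i c₀ c₁ hpi.2.1 hpi.1 (hquarter i hi)
          hle01 hhalf (h0.2.2.2 i hi) (h1.2.2.2 i hi) (t * L) hdvdL (by omega) j hj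
    · refine ⟨0, 0, ?_⟩
      rw [Finset.not_nonempty_iff_eq_empty] at hS
      rw [hS]
      simp
end

section
/- If S = u^j u' is periodic with primitive period u (j ≥ 2, u' a proper prefix of u), then |u| is the smallest period of S: for every p with 0 < p < |u|, there exists i such that S[i] ≠ S[i+p]. -/
lemma listPow_zero {α : Type*} (w : List α) : listPow w 0 = [] := rfl

lemma listPow_succ {α : Type*} (w : List α) (k : ℕ) :
    listPow w (k + 1) = w ++ listPow w k := by
  simp [listPow, List.replicate_succ]

lemma getPow {α : Type*} (u u' : List α) (hu' : u' <+: u)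
    (hlt : u'.length < u.length) :
    ∀ k i, i < k * u.length + u'.length →
      (listPow u k ++ u')[i]? = u[i % u.length]? := by
  intro k
  induction k with
  | zero =>
    intro i hi
    rw [listPow_zero, List.nil_append]
    have hiu : i < u'.length := by simpa using hi
    rw [Nat.mod_eq_of_lt (lt_trans hiu hlt)]
    obtain ⟨t, rfl⟩ := hu'
    rw [List.getElem?_append_left hiu]
  | succ n ih =>
    intro i hi
    rw [listPow_succ, List.append_assoc]
    by_cases hc : i < u.length
    · rw [List.getElem?_append_left hc, Nat.mod_eq_of_lt hc]
    · push_neg at hc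
      rw [List.getElem?_append_right hc]
      have hm : (n + 1) * u.length = n * u.length + u.length := by ring
      rw [ih (i - u.length) (by omega), Nat.mod_eq_sub_mod hc]

def IsPer {α : Type*} (S : List α) (q : ℕ) : Prop :=
  ∀ i, i + q < S.length → S[i]? = S[i + q]?

lemma isPer_sub {α : Type*} (S : List α) (L a b : ℕ) (hab : a ≤ b) (hbL : b ≤ L)
    (hlen : 2 * L ≤ S.length) (ha : IsPer S a) (hb : IsPer S b) : IsPer S (b - a) := by
  intro i hi
  by_cases hia : a ≤ i
  · have h1 : S[i - a]? = S[i]? := by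
      have := ha (i - a) (by omega)
      rwa [Nat.sub_add_cancel hia] at this
    have h2 : S[i - a]? = S[i - a + b]? := hb (i - a) (by omega)
    rw [← h1, h2]
    congr 1
    omega
  · have h1 : S[i]? = S[i + b]? := hb i (by omega)
    have h2 : S[i + (b - a)]? = S[i + b]? := by
      have := ha (i + (b - a)) (by omega)
      rw [this]
      congr 1
      omega
    rw [h1, ← h2]

lemma isPer_mod {α : Type*} (S : List α) (L a : ℕ) (ha0 : 0 < a) (haL : a ≤ L)
    (hlen : 2 * L ≤ S.length) (ha : IsPer S a) :
    ∀ b, b ≤ L → IsPer S b → IsPer S (b % a) := by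
  intro b
  induction b using Nat.strong_induction_on with
  | _ b ih =>
    intro hbL hb
    by_cases hba : b < a
    · rwa [Nat.mod_eq_of_lt hba]
    · push_neg at hba
      rw [Nat.mod_eq_sub_mod hba]
      exact ih (b - a) (by omega) (by omega)
        (isPer_sub S L a b hba hbL hlen ha hb)

lemma isPer_gcd {α : Type*} (S : List α) (L : ℕ) (hlen : 2 * L ≤ S.length) :
    ∀ a b, a ≤ L → b ≤ L → IsPer S a → IsPer S b → IsPer S (Nat.gcd a b) := by
  intro a
  induction a using Nat.strong_induction_on with
  | _ a ih =>
    intro b haL hbL ha hb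
    match a, ha, haL, ih with
    | 0, ha, haL, ih => simpa using hb
    | (a+1), ha, haL, ih =>
      rw [Nat.gcd_succ]
      have hm : IsPer S (b % (a + 1)) :=
        isPer_mod S L (a + 1) (Nat.succ_pos a) haL hlen ha b hbL hb
      exact ih (b % (a + 1)) (Nat.mod_lt b (Nat.succ_pos a)) (a + 1)
        (le_trans (le_of_lt (Nat.mod_lt b (Nat.succ_pos a))) haL) haL hm ha

/-- If `S = u^j u'` is periodic with primitive period `u` (`j ≥ 2`, `u'` a
proper prefix of `u`), then `|u|` is the smallest period of `S`: every
`p < |u|` fails to be a period. -/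
theorem primitive_period_is_smallest {α : Type*} (S u u' : List α) (j : ℕ)
    (hprim : IsPrimitive u) (hj : 2 ≤ j) (hu' : u' <+: u) (hu'ne : u' ≠ u)
    (hS : S = listPow u j ++ u') :
    ∀ p, 0 < p → p < u.length →
      ∃ i, i + p < S.length ∧ S[i]? ≠ S[i + p]? := by
  intro p hp hpL
  by_contra hcon
  push_neg at hcon
  set L := u.length with hLdef
  have hL : 0 < L := lt_trans hp hpL
  have hu'lt : u'.length < L :=
    lt_of_le_of_ne hu'.length_le (fun h => hu'ne (hu'.eq_of_length h))
  have hSlen : S.length = j * L + u'.length := by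
    rw [hS]; simp [listPow_length]; left; rfl
  have hS2 : 2 * L ≤ S.length := by
    have := Nat.mul_le_mul_right L hj
    omega
  have hget : ∀ i, i < S.length → S[i]? = u[i % L]? := by
    intro i hi
    rw [hS]
    exact getPow u u' hu' hu'lt j i (by rw [← hLdef]; omega)
  have hcon' : IsPer S p := hcon
  have hPdL : IsPer S L := by
    intro i hi
    rw [hget i (by omega), hget (i + L) hi, Nat.add_mod_right]
  set g := Nat.gcd p L with hgdef
  have hg0 : 0 < g := Nat.gcd_pos_of_pos_left L hp
  have hgdvd : g ∣ L := Nat.gcd_dvd_right p L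
  have hgp : g ≤ p := Nat.le_of_dvd hp (Nat.gcd_dvd_left p L)
  have hglt : g < L := lt_of_le_of_lt hgp hpL
  have hPg : IsPer S g := isPer_gcd S L hS2 p L (le_of_lt hpL) le_rfl hcon' hPdL
  -- transfer periodicity to u
  have hu_per : ∀ i, i < L → u[i]? = u[i % g]? := by
    intro i
    induction i using Nat.strong_induction_on with
    | _ i ih =>
      intro hiL
      by_cases hig : i < g
      · rw [Nat.mod_eq_of_lt hig]
      · push_neg at hig
        have h1 : S[i - g]? = S[i - g + g]? := hPg (i - g) (by omega)
        have h2 : i - g + g = i := by omega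
        rw [h2] at h1
        rw [hget (i - g) (by omega), hget i (by omega)] at h1
        rw [Nat.mod_eq_of_lt (by omega : i - g < L), Nat.mod_eq_of_lt hiL] at h1
        rw [← h1, ih (i - g) (by omega) (by omega), Nat.mod_eq_sub_mod hig]
  set v := u.take g with hvdef
  have hvlen : v.length = g := by
    rw [hvdef, List.length_take]
    omega
  obtain ⟨m, hm⟩ := hgdvd
  have hm2 : 2 ≤ m := by
    by_contra h
    push_neg at h
    interval_cases m
    · simp at hm; omega
    · simp at hm; omega
  have hLg : m * g = L := by rw [Nat.mul_comm]; omega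
  have hu_eq : u = listPow v m := by
    apply List.ext_getElem?
    intro n
    have hplen : (listPow v m).length = L := by
      rw [listPow_length, hvlen, hLg]
    by_cases hn : n < L
    · have h1 := getPow v [] List.nil_prefix (by simpa [hvlen] using hg0)
        m n (by simp only [hvlen, List.length_nil, Nat.add_zero]; omega)
      rw [List.append_nil] at h1
      rw [h1, hvlen, hu_per n hn, hvdef, List.getElem?_take_of_lt (Nat.mod_lt n hg0)]
    · rw [List.getElem?_eq_none_iff.2 (by omega), List.getElem?_eq_none_iff.2 (by omega)]
  exact hprim v m hm2 hu_eq
end
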